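/- Let Z_1,…,Z_n be independent Bernoulli random variables with parameters p_i, where each p_i ∈ {α_i, 1−α_i} for given α_i ∈ [1/2, 1]. Then E[|∑_{i=1}^n Z_i − n/2|], viewed as a function of the choices p_i, is maximized both when p_i = α_i ∧ (1−α_i) for all i and when p_i = α_i ∨ (1−α_i) for all i. -/

import Mathlib

open Finset

/-- Expected absolute deviation from `n/2` of a sum of `n` independent Bernoulli
variables with parameters `p i`, written out explicitly as a sum over outcomes. -/
noncomputable def bernoulliAbsDev (n : ℕ) (p : Fin n → ℝ) : ℝ :=
  ∑ ω : Fin n → Bool,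
    (∏ i, if ω i then p i else 1 - p i) *
      |(∑ i, if ω i then (1 : ℝ) else 0) - n / 2|


noncomputable def bDev (n : ℕ) (p : Fin n → ℝ) (f : ℝ → ℝ) : ℝ :=
  ∑ ω : Fin n → Bool,
    (∏ i, if ω i then p i else 1 - p i) * f (∑ i, if ω i then (1 : ℝ) else 0)

lemma bDev_zero (p : Fin 0 → ℝ) (f : ℝ → ℝ) : bDev 0 p f = f 0 := by
  simp [bDev]

lemma bDev_succ (n : ℕ) (p : Fin (n+1) → ℝ) (f : ℝ → ℝ) :
    bDev (n+1) p f = (1 - p 0) * bDev n (p ∘ Fin.succ) f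
      + p 0 * bDev n (p ∘ Fin.succ) (fun x => f (x + 1)) := by
  unfold bDev
  rw [← (Fin.consEquiv fun _ : Fin (n+1) => Bool).sum_comp]
  rw [Fintype.sum_prod_type]
  rw [Fintype.sum_bool]
  simp only [Fin.consEquiv_apply, Fin.prod_univ_succ, Fin.sum_univ_succ, Fin.cons_zero,
    Fin.cons_succ, if_true, if_false, Function.comp]
  rw [← Finset.sum_add_distrib, Finset.mul_sum, Finset.mul_sum, ← Finset.sum_add_distrib]
  refine Finset.sum_congr rfl fun ω _ => ?_
  simp only [Bool.false_eq_true, if_false, add_zero]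
  ring

lemma weight_nonneg {n : ℕ} {p : Fin n → ℝ} (h0 : ∀ i, 0 ≤ p i) (h1 : ∀ i, p i ≤ 1)
    (ω : Fin n → Bool) : 0 ≤ ∏ i, if ω i then p i else 1 - p i := by
  refine Finset.prod_nonneg fun i _ => ?_
  cases hω : ω i <;> simp [h0 i, sub_nonneg.2 (h1 i)]

lemma bDev_mono_fun {n : ℕ} {p : Fin n → ℝ} (h0 : ∀ i, 0 ≤ p i) (h1 : ∀ i, p i ≤ 1)
    {f g : ℝ → ℝ} (hfg : ∀ x, f x ≤ g x) : bDev n p f ≤ bDev n p g := by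
  refine Finset.sum_le_sum fun ω _ => ?_
  exact mul_le_mul_of_nonneg_left (hfg _) (weight_nonneg h0 h1 ω)

lemma bDev_sub {n : ℕ} (p : Fin n → ℝ) (f g : ℝ → ℝ) :
    bDev n p f - bDev n p g = bDev n p (fun x => f x - g x) := by
  unfold bDev
  rw [← Finset.sum_sub_distrib]
  exact Finset.sum_congr rfl fun ω _ => by ring

lemma bDev_mono_p :
    ∀ (n : ℕ) (ψ : ℝ → ℝ), Monotone ψ →
      ∀ (p q : Fin n → ℝ), (∀ i, 0 ≤ q i) → (∀ i, q i ≤ p i) → (∀ i, p i ≤ 1) →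
      bDev n q ψ ≤ bDev n p ψ := by
  intro n
  induction n with
  | zero => intro ψ _ p q _ _ _; rw [bDev_zero, bDev_zero]
  | succ n ih =>
    intro ψ hψ p q hq0 hqp hp1
    rw [bDev_succ, bDev_succ]
    have hψ1 : Monotone (fun x : ℝ => ψ (x + 1)) := fun x y hxy => hψ (by linarith)
    have hp0 : ∀ i, 0 ≤ p i := fun i => le_trans (hq0 i) (hqp i)
    have hq1 : ∀ i, q i ≤ 1 := fun i => le_trans (hqp i) (hp1 i)
    have hB : bDev n (q ∘ Fin.succ) ψ ≤ bDev n (p ∘ Fin.succ) ψ :=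
      ih ψ hψ _ _ (fun i => hq0 _) (fun i => hqp _) (fun i => hp1 _)
    have hB1 : bDev n (q ∘ Fin.succ) (fun x => ψ (x + 1)) ≤
        bDev n (p ∘ Fin.succ) (fun x => ψ (x + 1)) :=
      ih _ hψ1 _ _ (fun i => hq0 _) (fun i => hqp _) (fun i => hp1 _)
    have hA : bDev n (p ∘ Fin.succ) ψ ≤ bDev n (p ∘ Fin.succ) (fun x => ψ (x + 1)) :=
      bDev_mono_fun (fun i => hp0 _) (fun i => hp1 _) (fun x => hψ (by linarith))
    have h1 : 0 ≤ q 0 := hq0 0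
    have h2 : q 0 ≤ p 0 := hqp 0
    have h3 : p 0 ≤ 1 := hp1 0
    nlinarith [mul_le_mul_of_nonneg_left hB (by linarith : (0:ℝ) ≤ 1 - q 0),
      mul_le_mul_of_nonneg_left hB1 h1,
      mul_le_mul_of_nonneg_left hA (by linarith : (0:ℝ) ≤ p 0 - q 0)]
lemma bDev_supermod (φ : ℝ → ℝ)
    (hconv : ∀ a x y : ℝ, 0 ≤ a → x ≤ y → φ (x + a) - φ x ≤ φ (y + a) - φ y) :
    ∀ (n : ℕ) (p q : Fin n → ℝ),
      (∀ i, 0 ≤ p i) → (∀ i, p i ≤ 1) → (∀ i, 0 ≤ q i) → (∀ i, q i ≤ 1) →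
      ∀ s t : ℝ, t ≤ s →
      bDev n p (fun x => φ (x + s)) + bDev n q (fun x => φ (x + t)) ≤
        bDev n (fun i => max (p i) (q i)) (fun x => φ (x + s)) +
        bDev n (fun i => min (p i) (q i)) (fun x => φ (x + t)) := by
  intro n
  induction n with
  | zero => intro p q _ _ _ _ s t _; simp [bDev_zero]
  | succ n ih =>
    intro p q hp0 hp1 hq0 hq1 s t hts
    have hcomp1 : p ∘ Fin.succ = fun i => p (Fin.succ i) := rfl
    have hcomp2 : q ∘ Fin.succ = fun i => q (Fin.succ i) := rfl
    have hcomp3 : (fun i => max (p i) (q i)) ∘ Fin.succ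
        = fun i => max (p (Fin.succ i)) (q (Fin.succ i)) := rfl
    have hcomp4 : (fun i => min (p i) (q i)) ∘ Fin.succ
        = fun i => min (p (Fin.succ i)) (q (Fin.succ i)) := rfl
    have hshift : ∀ (r : Fin n → ℝ) (u : ℝ),
        bDev n r (fun x => φ (x + 1 + u)) = bDev n r (fun x => φ (x + (u + 1))) := by
      intro r u
      congr 1
      funext x
      congr 1
      ring
    rw [bDev_succ, bDev_succ, bDev_succ, bDev_succ, hcomp1, hcomp2, hcomp3, hcomp4,
      hshift, hshift, hshift, hshift]
    -- bounds
    have hP0 : ∀ i : Fin n, 0 ≤ p (Fin.succ i) := fun i => hp0 _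
    have hP1 : ∀ i : Fin n, p (Fin.succ i) ≤ 1 := fun i => hp1 _
    have hQ0 : ∀ i : Fin n, 0 ≤ q (Fin.succ i) := fun i => hq0 _
    have hQ1 : ∀ i : Fin n, q (Fin.succ i) ≤ 1 := fun i => hq1 _
    have hm0 : ∀ i : Fin n, 0 ≤ min (p (Fin.succ i)) (q (Fin.succ i)) :=
      fun i => le_min (hP0 i) (hQ0 i)
    have hm1 : ∀ i : Fin n, min (p (Fin.succ i)) (q (Fin.succ i)) ≤ 1 :=
      fun i => le_trans (min_le_left _ _) (hP1 i)
    have hM0 : ∀ i : Fin n, 0 ≤ max (p (Fin.succ i)) (q (Fin.succ i)) :=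
      fun i => le_trans (hP0 i) (le_max_left _ _)
    have hM1 : ∀ i : Fin n, max (p (Fin.succ i)) (q (Fin.succ i)) ≤ 1 :=
      fun i => max_le (hP1 i) (hQ1 i)
    have hmM : ∀ i : Fin n, min (p (Fin.succ i)) (q (Fin.succ i))
        ≤ max (p (Fin.succ i)) (q (Fin.succ i)) :=
      fun i => le_trans (min_le_left _ _) (le_max_left _ _)
    -- the three instances of the inductive hypothesis
    have ih1 : bDev n (fun i => p (Fin.succ i)) (fun x => φ (x + s)) +
        bDev n (fun i => q (Fin.succ i)) (fun x => φ (x + t)) ≤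
        bDev n (fun i => max (p (Fin.succ i)) (q (Fin.succ i))) (fun x => φ (x + s)) +
        bDev n (fun i => min (p (Fin.succ i)) (q (Fin.succ i))) (fun x => φ (x + t)) :=
      ih _ _ hP0 hP1 hQ0 hQ1 s t hts
    have ih2 : bDev n (fun i => p (Fin.succ i)) (fun x => φ (x + (s + 1))) +
        bDev n (fun i => q (Fin.succ i)) (fun x => φ (x + (t + 1))) ≤
        bDev n (fun i => max (p (Fin.succ i)) (q (Fin.succ i))) (fun x => φ (x + (s + 1))) +
        bDev n (fun i => min (p (Fin.succ i)) (q (Fin.succ i))) (fun x => φ (x + (t + 1))) :=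
      ih _ _ hP0 hP1 hQ0 hQ1 (s+1) (t+1) (by linarith)
    have ih3 : bDev n (fun i => p (Fin.succ i)) (fun x => φ (x + (s + 1))) +
        bDev n (fun i => q (Fin.succ i)) (fun x => φ (x + t)) ≤
        bDev n (fun i => max (p (Fin.succ i)) (q (Fin.succ i))) (fun x => φ (x + (s + 1))) +
        bDev n (fun i => min (p (Fin.succ i)) (q (Fin.succ i))) (fun x => φ (x + t)) :=
      ih _ _ hP0 hP1 hQ0 hQ1 (s+1) t (by linarith)
    -- the cross inequality X
    have X : bDev n (fun i => p (Fin.succ i)) (fun x => φ (x + s)) +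
        bDev n (fun i => q (Fin.succ i)) (fun x => φ (x + (t + 1))) ≤
        bDev n (fun i => max (p (Fin.succ i)) (q (Fin.succ i))) (fun x => φ (x + (s + 1))) +
        bDev n (fun i => min (p (Fin.succ i)) (q (Fin.succ i))) (fun x => φ (x + t)) := by
      rcases le_total (t + 1) s with hc | hc
      · -- use ih at (s, t+1), then a swap step
        have ihX : bDev n (fun i => p (Fin.succ i)) (fun x => φ (x + s)) +
            bDev n (fun i => q (Fin.succ i)) (fun x => φ (x + (t + 1))) ≤
            bDev n (fun i => max (p (Fin.succ i)) (q (Fin.succ i))) (fun x => φ (x + s)) +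
            bDev n (fun i => min (p (Fin.succ i)) (q (Fin.succ i))) (fun x => φ (x + (t + 1))) :=
          ih _ _ hP0 hP1 hQ0 hQ1 s (t+1) hc
        have e1 : bDev n (fun i => min (p (Fin.succ i)) (q (Fin.succ i))) (fun x => φ (x + (t + 1))) -
            bDev n (fun i => min (p (Fin.succ i)) (q (Fin.succ i))) (fun x => φ (x + t)) =
            bDev n (fun i => min (p (Fin.succ i)) (q (Fin.succ i)))
              (fun x => φ (x + (t + 1)) - φ (x + t)) := bDev_sub _ _ _
        have e2 : bDev n (fun i => max (p (Fin.succ i)) (q (Fin.succ i))) (fun x => φ (x + (s + 1))) -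
            bDev n (fun i => max (p (Fin.succ i)) (q (Fin.succ i))) (fun x => φ (x + s)) =
            bDev n (fun i => max (p (Fin.succ i)) (q (Fin.succ i)))
              (fun x => φ (x + (s + 1)) - φ (x + s)) := bDev_sub _ _ _
        have c1 : bDev n (fun i => min (p (Fin.succ i)) (q (Fin.succ i)))
              (fun x => φ (x + (t + 1)) - φ (x + t)) ≤
            bDev n (fun i => min (p (Fin.succ i)) (q (Fin.succ i)))
              (fun x => φ (x + (s + 1)) - φ (x + s)) := by
          refine bDev_mono_fun hm0 hm1 fun x => ?_
          have h' := hconv 1 (x + t) (x + s) zero_le_one (by linarith)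
          have r1 : x + t + 1 = x + (t + 1) := by ring
          have r2 : x + s + 1 = x + (s + 1) := by ring
          rw [r1, r2] at h'
          linarith
        have c2 : bDev n (fun i => min (p (Fin.succ i)) (q (Fin.succ i)))
              (fun x => φ (x + (s + 1)) - φ (x + s)) ≤
            bDev n (fun i => max (p (Fin.succ i)) (q (Fin.succ i)))
              (fun x => φ (x + (s + 1)) - φ (x + s)) := by
          refine bDev_mono_p n _ ?_ _ _ hm0 hmM hM1
          intro x y hxy
          show φ (x + (s + 1)) - φ (x + s) ≤ φ (y + (s + 1)) - φ (y + s)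
          have h' := hconv 1 (x + s) (y + s) zero_le_one (by linarith)
          have r1 : x + s + 1 = x + (s + 1) := by ring
          have r2 : y + s + 1 = y + (s + 1) := by ring
          rw [r1, r2] at h'
          linarith
        linarith
      · -- use ih with roles of p and q swapped at (t+1, s), then a swap step
        have ihX : bDev n (fun i => q (Fin.succ i)) (fun x => φ (x + (t + 1))) +
            bDev n (fun i => p (Fin.succ i)) (fun x => φ (x + s)) ≤
            bDev n (fun i => max (q (Fin.succ i)) (p (Fin.succ i))) (fun x => φ (x + (t + 1))) +
            bDev n (fun i => min (q (Fin.succ i)) (p (Fin.succ i))) (fun x => φ (x + s)) :=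
          ih _ _ hQ0 hQ1 hP0 hP1 (t+1) s hc
        have ecomm : (fun i => max (q (Fin.succ i)) (p (Fin.succ i)))
            = (fun i => max (p (Fin.succ i)) (q (Fin.succ i))) := funext fun i => max_comm _ _
        have ecomm' : (fun i => min (q (Fin.succ i)) (p (Fin.succ i)))
            = (fun i => min (p (Fin.succ i)) (q (Fin.succ i))) := funext fun i => min_comm _ _
        rw [ecomm, ecomm'] at ihX
        have e1 : bDev n (fun i => min (p (Fin.succ i)) (q (Fin.succ i))) (fun x => φ (x + s)) -
            bDev n (fun i => min (p (Fin.succ i)) (q (Fin.succ i))) (fun x => φ (x + t)) =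
            bDev n (fun i => min (p (Fin.succ i)) (q (Fin.succ i)))
              (fun x => φ (x + s) - φ (x + t)) := bDev_sub _ _ _
        have e2 : bDev n (fun i => max (p (Fin.succ i)) (q (Fin.succ i))) (fun x => φ (x + (s + 1))) -
            bDev n (fun i => max (p (Fin.succ i)) (q (Fin.succ i))) (fun x => φ (x + (t + 1))) =
            bDev n (fun i => max (p (Fin.succ i)) (q (Fin.succ i)))
              (fun x => φ (x + (s + 1)) - φ (x + (t + 1))) := bDev_sub _ _ _
        have c1 : bDev n (fun i => min (p (Fin.succ i)) (q (Fin.succ i)))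
              (fun x => φ (x + s) - φ (x + t)) ≤
            bDev n (fun i => min (p (Fin.succ i)) (q (Fin.succ i)))
              (fun x => φ (x + (s + 1)) - φ (x + (t + 1))) := by
          refine bDev_mono_fun hm0 hm1 fun x => ?_
          have h' := hconv (s - t) (x + t) (x + t + 1) (by linarith) (by linarith)
          have r1 : x + t + (s - t) = x + s := by ring
          have r2 : x + t + 1 + (s - t) = x + (s + 1) := by ring
          have r3 : x + t + 1 = x + (t + 1) := by ring
          rw [r1, r2, r3] at h'
          linarith
        have c2 : bDev n (fun i => min (p (Fin.succ i)) (q (Fin.succ i)))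
              (fun x => φ (x + (s + 1)) - φ (x + (t + 1))) ≤
            bDev n (fun i => max (p (Fin.succ i)) (q (Fin.succ i)))
              (fun x => φ (x + (s + 1)) - φ (x + (t + 1))) := by
          refine bDev_mono_p n _ ?_ _ _ hm0 hmM hM1
          intro x y hxy
          show φ (x + (s + 1)) - φ (x + (t + 1)) ≤ φ (y + (s + 1)) - φ (y + (t + 1))
          have h' := hconv (s - t) (x + (t + 1)) (y + (t + 1)) (by linarith) (by linarith)
          have r1 : x + (t + 1) + (s - t) = x + (s + 1) := by ring
          have r2 : y + (t + 1) + (s - t) = y + (s + 1) := by ring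
          rw [r1, r2] at h'
          linarith
        linarith
    -- combine
    rcases le_total (q 0) (p 0) with h | h
    · rw [max_eq_left h, min_eq_right h]
      have k1 := mul_le_mul_of_nonneg_left ih1 (show (0:ℝ) ≤ 1 - p 0 by linarith [hp1 0])
      have k2 := mul_le_mul_of_nonneg_left ih2 (hq0 0)
      have k3 := mul_le_mul_of_nonneg_left ih3 (show (0:ℝ) ≤ p 0 - q 0 by linarith)
      nlinarith [k1, k2, k3]
    · rw [max_eq_right h, min_eq_left h]
      have k1 := mul_le_mul_of_nonneg_left ih1 (show (0:ℝ) ≤ 1 - q 0 by linarith [hq1 0])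
      have k2 := mul_le_mul_of_nonneg_left ih2 (hp0 0)
      have k3 := mul_le_mul_of_nonneg_left X (show (0:ℝ) ≤ q 0 - p 0 by linarith)
      nlinarith [k1, k2, k3]

lemma abs_shift_conv (c : ℝ) :
    ∀ a x y : ℝ, 0 ≤ a → x ≤ y → |x + a - c| - |x - c| ≤ |y + a - c| - |y - c| := by
  have core : ∀ a u v : ℝ, 0 ≤ a → u ≤ v → |u + a| - |u| ≤ |v + a| - |v| := by
    intro a u v ha huv
    rcases le_total 0 v with hv | hv
    · have h1 : |v + a| = v + a := abs_of_nonneg (by linarith)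
      have h2 : |v| = v := abs_of_nonneg hv
      have h3 : |u + a| ≤ |u| + a := by
        calc |u + a| ≤ |u| + |a| := abs_add_le u a
        _ = |u| + a := by rw [abs_of_nonneg ha]
      linarith
    · have h2 : |v| = -v := abs_of_nonpos hv
      have hu : |u| = -u := abs_of_nonpos (by linarith)
      rcases le_total (u + a) 0 with h | h
      · have h4 : |u + a| = -(u + a) := abs_of_nonpos h
        have h5 : -(v + a) ≤ |v + a| := neg_le_abs _
        linarith
      · have h4 : |u + a| = u + a := abs_of_nonneg h
        have h5 : |v + a| = v + a := abs_of_nonneg (by linarith)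
        linarith
  intro a x y ha hxy
  have := core a (x - c) (y - c) ha (by linarith)
  have r1 : x - c + a = x + a - c := by ring
  have r2 : y - c + a = y + a - c := by ring
  rw [r1, r2] at this
  exact this

lemma bDev_compl (n : ℕ) (p : Fin n → ℝ) :
    bDev n (fun i => 1 - p i) (fun x => |x - n / 2|) = bDev n p (fun x => |x - n / 2|) := by
  unfold bDev
  refine Fintype.sum_equiv
    ⟨fun ω i => !(ω i), fun ω i => !(ω i), fun ω => by funext i; simp, fun ω => by funext i; simp⟩
    _ _ fun ω => ?_
  simp only [Equiv.coe_fn_mk]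
  have hw : (∏ i, if ω i then 1 - p i else 1 - (1 - p i)) =
      ∏ i, if !(ω i) then p i else 1 - p i := by
    refine Finset.prod_congr rfl fun i _ => ?_
    cases hωi : ω i <;> simp
  have hc : (∑ i, if !(ω i) then (1:ℝ) else 0) = n - ∑ i, if ω i then (1:ℝ) else 0 := by
    rw [eq_sub_iff_add_eq, ← Finset.sum_add_distrib]
    have : ∀ i : Fin n, ((if !(ω i) then (1:ℝ) else 0) + if ω i then (1:ℝ) else 0) = 1 := by
      intro i; cases hωi : ω i <;> simp
    rw [Finset.sum_congr rfl fun i _ => this i]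
    simp [Finset.card_univ]
  rw [hw, hc]
  congr 1
  rw [show (n:ℝ) - (∑ i, if ω i then (1:ℝ) else 0) - n / 2
      = -((∑ i, if ω i then (1:ℝ) else 0) - n / 2) by ring, abs_neg]

/-- Among all choices `p i ∈ {α i, 1 - α i}` for the parameters of `n` independent
Bernoulli variables `Z i`, the expectation `E|∑ Z i - n/2|` is maximized both when
`p i = α i ⊓ (1 - α i)` for all `i` and when `p i = α i ⊔ (1 - α i)` for all `i`. -/
theorem bernoulliAbsDev_max (n : ℕ) (α : Fin n → ℝ)
    (hα : ∀ i, α i ∈ Set.Icc (1 / 2 : ℝ) 1)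
    (p : Fin n → ℝ) (hp : ∀ i, p i = α i ∨ p i = 1 - α i) :
    bernoulliAbsDev n p ≤ bernoulliAbsDev n (fun i => min (α i) (1 - α i)) ∧
    bernoulliAbsDev n p ≤ bernoulliAbsDev n (fun i => max (α i) (1 - α i)) := by
  have hbd : ∀ r : Fin n → ℝ, bernoulliAbsDev n r = bDev n r (fun x => |x - n / 2|) :=
    fun r => rfl
  have hp0 : ∀ i, 0 ≤ p i := by
    intro i; rcases hp i with h | h <;> rw [h] <;> linarith [(hα i).1, (hα i).2]
  have hp1 : ∀ i, p i ≤ 1 := by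
    intro i; rcases hp i with h | h <;> rw [h] <;> linarith [(hα i).1, (hα i).2]
  have key := bDev_supermod (fun x => |x - (n:ℝ) / 2|) (abs_shift_conv _) n p
    (fun i => 1 - p i) hp0 hp1 (fun i => show (0:ℝ) ≤ 1 - p i by linarith [hp1 i]) (fun i => show (1:ℝ) - p i ≤ 1 by linarith [hp0 i])
    0 0 le_rfl
  simp only [add_zero] at key
  have hmax : (fun i => max (p i) (1 - p i)) = fun i => max (α i) (1 - α i) := by
    funext i; rcases hp i with h | h
    · rw [h]
    · rw [h, sub_sub_cancel, max_comm]
  have hmin : (fun i => min (p i) (1 - p i)) = fun i => min (α i) (1 - α i) := by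
    funext i; rcases hp i with h | h
    · rw [h]
    · rw [h, sub_sub_cancel, min_comm]
  rw [hmax, hmin] at key
  have hsym : bDev n (fun i => 1 - p i) (fun x => |x - (n:ℝ) / 2|)
      = bDev n p (fun x => |x - (n:ℝ) / 2|) := bDev_compl n p
  have hminmax := bDev_compl n (fun i => max (α i) (1 - α i))
  have eqmin : (fun i : Fin n => 1 - max (α i) (1 - α i)) = fun i => min (α i) (1 - α i) := by
    funext i
    rcases le_total (α i) (1 - α i) with h | h
    · rw [min_eq_left h, max_eq_right h]; ring
    · rw [min_eq_right h, max_eq_left h]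
  rw [eqmin] at hminmax
  rw [hbd, hbd, hbd]
  constructor <;> linarith [key, hsym, hminmax]
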